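/- Let X be a finite-dimensional Banach space, T, A nonzero operators, and suppose M_{W(T)} = { (μx₀, conj(μ)x₀*) : |μ| = 1 } for a fixed pair (x₀, x₀*) with x₀*(x₀) = 1 = ‖x₀‖ = ‖x₀*‖. Then T ⊥_B^w A if and only if x₀*(A x₀) = 0. -/

import Mathlib

/-- The numerical radius of a bounded linear operator. -/
noncomputable def nrad {𝕜 X : Type*} [RCLike 𝕜] [NormedAddCommGroup X] [NormedSpace 𝕜 X]
    (T : X →L[𝕜] X) : ℝ :=
  sSup {r : ℝ | ∃ (x : X) (f : X →L[𝕜] 𝕜), ‖x‖ = 1 ∧ ‖f‖ = 1 ∧ f x = 1 ∧ r = ‖f (T x)‖}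

/-- The numerical radius attainment set of `T`. -/
noncomputable def MW {𝕜 X : Type*} [RCLike 𝕜] [NormedAddCommGroup X] [NormedSpace 𝕜 X]
    (T : X →L[𝕜] X) : Set (X × (X →L[𝕜] 𝕜)) :=
  {p | ‖p.1‖ = 1 ∧ ‖p.2‖ = 1 ∧ p.2 p.1 = 1 ∧ ‖p.2 (T p.1)‖ = nrad T}

section aux
variable {𝕜 X : Type*} [RCLike 𝕜] [NormedAddCommGroup X] [NormedSpace 𝕜 X]

def Kset (𝕜 X : Type*) [RCLike 𝕜] [NormedAddCommGroup X] [NormedSpace 𝕜 X] :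
    Set (X × (X →L[𝕜] 𝕜)) := {p | ‖p.1‖ = 1 ∧ ‖p.2‖ = 1 ∧ p.2 p.1 = 1}

lemma eval_le (S : X →L[𝕜] X) {p : X × (X →L[𝕜] 𝕜)} (hp : p ∈ Kset 𝕜 X) :
    ‖p.2 (S p.1)‖ ≤ ‖S‖ := by
  calc ‖p.2 (S p.1)‖ ≤ ‖p.2‖ * ‖S p.1‖ := p.2.le_opNorm _
  _ ≤ 1 * (‖S‖ * ‖p.1‖) := by
      rw [hp.2.1]; exact mul_le_mul_of_nonneg_left (S.le_opNorm p.1) zero_le_one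
  _ = ‖S‖ := by rw [hp.1]; ring

lemma nrad_eq_sSup_image (T : X →L[𝕜] X) :
    nrad T = sSup ((fun p : X × (X →L[𝕜] 𝕜) => ‖p.2 (T p.1)‖) '' Kset 𝕜 X) := by
  unfold nrad; congr 1; ext r; constructor
  · rintro ⟨x, f, h1, h2, h3, h4⟩; exact ⟨(x, f), ⟨h1, h2, h3⟩, h4.symm⟩
  · rintro ⟨⟨x, f⟩, ⟨h1, h2, h3⟩, h4⟩; exact ⟨x, f, h1, h2, h3, h4.symm⟩

lemma le_nrad (T : X →L[𝕜] X) {p : X × (X →L[𝕜] 𝕜)} (hp : p ∈ Kset 𝕜 X) :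
    ‖p.2 (T p.1)‖ ≤ nrad T := by
  apply le_csSup
  · exact ⟨‖T‖, by rintro r ⟨x, f, h1, h2, h3, rfl⟩; exact eval_le T (p := (x,f)) ⟨h1, h2, h3⟩⟩
  · exact ⟨p.1, p.2, hp.1, hp.2.1, hp.2.2, rfl⟩

lemma continuous_eval (S : X →L[𝕜] X) :
    Continuous fun p : X × (X →L[𝕜] 𝕜) => p.2 (S p.1) :=
  isBoundedBilinearMap_apply.continuous.comp
    (continuous_snd.prodMk (S.continuous.comp continuous_fst))

variable [FiniteDimensional 𝕜 X]

lemma isCompact_Kset : IsCompact (Kset 𝕜 X) := by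
  haveI : ProperSpace X := FiniteDimensional.proper 𝕜 X
  haveI : ProperSpace (X →L[𝕜] 𝕜) := FiniteDimensional.proper 𝕜 _
  have hclosed : IsClosed (Kset 𝕜 X) := by
    have h1 : IsClosed {p : X × (X →L[𝕜] 𝕜) | ‖p.1‖ = 1} :=
      isClosed_eq (continuous_fst.norm) continuous_const
    have h2 : IsClosed {p : X × (X →L[𝕜] 𝕜) | ‖p.2‖ = 1} :=
      isClosed_eq (continuous_snd.norm) continuous_const
    have h3 : IsClosed {p : X × (X →L[𝕜] 𝕜) | p.2 p.1 = 1} :=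
      isClosed_eq (continuous_eval (ContinuousLinearMap.id 𝕜 X)) continuous_const
    exact (h1.inter (h2.inter h3))
  have hbdd : Bornology.IsBounded (Kset 𝕜 X) := by
    rw [Metric.isBounded_iff_subset_closedBall 0]
    refine ⟨1, fun p hp => ?_⟩
    rw [Metric.mem_closedBall, dist_zero_right]
    rw [Prod.norm_def, hp.1, hp.2.1]; simp
  exact Metric.isCompact_of_isClosed_isBounded hclosed hbdd

lemma exists_max (S : X →L[𝕜] X) (hne : (Kset 𝕜 X).Nonempty) :
    ∃ p ∈ Kset 𝕜 X, nrad S = ‖p.2 (S p.1)‖ := by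
  obtain ⟨p, hp, hmax⟩ := isCompact_Kset.exists_isMaxOn hne ((continuous_eval S).norm.continuousOn)
  refine ⟨p, hp, ?_⟩
  rw [nrad_eq_sSup_image]
  exact IsGreatest.csSup_eq ⟨⟨p, hp, rfl⟩, by rintro r ⟨q, hq, rfl⟩; exact hmax hq⟩

end aux


private lemma norm_add_sq' {𝕜 : Type*} [RCLike 𝕜] (u w : 𝕜) :
    ‖u + w‖^2 = ‖u‖^2 + 2 * RCLike.re ((starRingEnd 𝕜) u * w) + ‖w‖^2 := by
  rw [show (starRingEnd 𝕜) u * w = w * (starRingEnd 𝕜) u from mul_comm _ _,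
    ← RCLike.inner_apply (𝕜 := 𝕜), @norm_add_sq 𝕜]

/-- if `M_{W(T)} = { (μx₀, conj(μ)x₀*) : |μ| = 1 }` for a fixed pair
`(x₀, x₀*)` with `x₀*(x₀) = 1 = ‖x₀‖ = ‖x₀*‖`, then `T ⊥_B^w A ↔ x₀*(A x₀) = 0`. -/
theorem nu_orthogonality_single_attainment (𝕜 X : Type*) [RCLike 𝕜] [NormedAddCommGroup X]
    [NormedSpace 𝕜 X] [FiniteDimensional 𝕜 X]
    (T A : X →L[𝕜] X) (hT : T ≠ 0) (hA : A ≠ 0)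
    (x₀ : X) (f₀ : X →L[𝕜] 𝕜) (hx₀ : ‖x₀‖ = 1) (hf₀ : ‖f₀‖ = 1) (hfx : f₀ x₀ = 1)
    (hM : MW T = {p | ∃ μ : 𝕜, ‖μ‖ = 1 ∧ p = (μ • x₀, (starRingEnd 𝕜) μ • f₀)}) :
    (∀ lam : 𝕜, nrad T ≤ nrad (T + lam • A)) ↔ f₀ (A x₀) = 0 := by
  classical
  have hK₀ : ((x₀, f₀) : X × (X →L[𝕜] 𝕜)) ∈ Kset 𝕜 X := ⟨hx₀, hf₀, hfx⟩
  have hMW₀ : ((x₀, f₀) : X × (X →L[𝕜] 𝕜)) ∈ MW T := by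
    rw [hM]; exact ⟨1, by simp, by simp⟩
  have hTx₀ : ‖f₀ (T x₀)‖ = nrad T := hMW₀.2.2.2
  constructor
  · -- hard direction
    intro horth
    by_contra hc
    set c := f₀ (A x₀) with hcdef
    have hc_pos : 0 < ‖c‖ := norm_pos_iff.mpr hc
    have hν_nonneg : 0 ≤ nrad T := hTx₀ ▸ norm_nonneg _
    -- nrad T > 0
    have hν_pos : 0 < nrad T := by
      rcases hν_nonneg.lt_or_eq with h | h
      · exact h
      · exfalso
        have hν0 : nrad T = 0 := h.symm
        have hall : ∀ y : X, ∃ s : 𝕜, y = s • x₀ := by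
          intro y
          rcases eq_or_ne y 0 with rfl | hy
          · exact ⟨0, by simp⟩
          · have hny : ‖y‖ ≠ 0 := norm_ne_zero_iff.mpr hy
            have hny' : ((‖y‖ : ℝ) : 𝕜) ≠ 0 := by
              simpa using hny
            set z : X := ((‖y‖ : ℝ) : 𝕜)⁻¹ • y with hzdef
            have hx1 : ‖z‖ = 1 := by
              rw [hzdef, norm_smul, norm_inv, RCLike.norm_ofReal, abs_norm,
                inv_mul_cancel₀ hny]
            obtain ⟨f, hf1, hfy⟩ := exists_dual_vector 𝕜 z
              (by intro h0; rw [h0] at hx1; norm_num at hx1)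
            have hK : ((z, f) : X × (X →L[𝕜] 𝕜)) ∈ Kset 𝕜 X :=
              ⟨hx1, hf1, by rw [hfy, hx1]; norm_num⟩
            have hMWy : ((z, f) : X × (X →L[𝕜] 𝕜)) ∈ MW T := by
              refine ⟨hK.1, hK.2.1, hK.2.2, ?_⟩
              have h1 := le_nrad T hK
              have h2 : (0:ℝ) ≤ ‖f (T z)‖ := norm_nonneg _
              rw [hν0] at h1 ⊢; linarith
            rw [hM] at hMWy
            obtain ⟨μ, hμ, heq⟩ := hMWy
            have h1 : z = μ • x₀ := congrArg Prod.fst heq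
            refine ⟨((‖y‖ : ℝ) : 𝕜) * μ, ?_⟩
            have h2 : y = ((‖y‖ : ℝ) : 𝕜) • z := by
              rw [hzdef, smul_smul, mul_inv_cancel₀ hny', one_smul]
            calc y = ((‖y‖ : ℝ) : 𝕜) • z := h2
              _ = (((‖y‖ : ℝ) : 𝕜) * μ) • x₀ := by rw [h1, smul_smul]
        obtain ⟨s, hs⟩ := hall (T x₀)
        have hsval : f₀ (T x₀) = s := by rw [hs, map_smul, hfx, smul_eq_mul, mul_one]
        have hs0 : s = 0 := by
          have h3 := hTx₀; rw [hν0, hsval] at h3; exact norm_eq_zero.mp h3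
        have hTx0 : T x₀ = 0 := by rw [hs, hs0, zero_smul]
        apply hT
        ext y
        obtain ⟨s', hs'⟩ := hall y
        rw [hs', map_smul, hTx0, smul_zero]; simp
    set ν := nrad T with hνdef
    set a := f₀ (T x₀) with hadef
    have ha : ‖a‖ = ν := hTx₀
    have hd_pos : 0 < ν * ‖c‖ := mul_pos hν_pos hc_pos
    set σ : 𝕜 := (-(a * (starRingEnd 𝕜) c)) / (((ν * ‖c‖ : ℝ) : 𝕜)) with hσdef
    have hσ1 : ‖σ‖ = 1 := by
      rw [hσdef, norm_div, norm_neg, norm_mul, RCLike.norm_conj, RCLike.norm_ofReal,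
        abs_of_pos hd_pos, ha, div_self hd_pos.ne']
    set t : ℕ → ℝ := fun n => 1 / (n + 1) with htdef
    have htpos : ∀ n, 0 < t n := fun n => by positivity
    have htle : ∀ n, t n ≤ 1 := fun n => by
      rw [htdef]; rw [div_le_one (by positivity)]; push_cast; linarith
    set lam : ℕ → 𝕜 := fun n => ((t n : ℝ) : 𝕜) * σ with hlamdef
    have hne : (Kset 𝕜 X).Nonempty := ⟨(x₀, f₀), hK₀⟩
    have hmaxex : ∀ n, ∃ p ∈ Kset 𝕜 X,
        nrad (T + lam n • A) = ‖p.2 ((T + lam n • A) p.1)‖ := fun n => exists_max _ hne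
    choose p hpK hpeq using hmaxex
    set u : ℕ → 𝕜 := fun n => (p n).2 (T (p n).1) with hudef
    set v : ℕ → 𝕜 := fun n => (p n).2 (A (p n).1) with hvdef
    have hkey : ∀ n, ν ≤ ‖u n + lam n * v n‖ := by
      intro n
      have h1 := horth (lam n)
      rw [hpeq n] at h1
      have h2 : (p n).2 ((T + lam n • A) (p n).1) = u n + lam n * v n := by
        simp [ContinuousLinearMap.add_apply, ContinuousLinearMap.smul_apply, map_add,
          map_smul, smul_eq_mul, hudef, hvdef]
      rwa [h2] at h1
    have hu_le : ∀ n, ‖u n‖ ≤ ν := fun n => le_nrad T (hpK n)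
    have hv_le : ∀ n, ‖v n‖ ≤ ‖A‖ := fun n => eval_le A (hpK n)
    obtain ⟨q, hqK, φ, hφ, hconv⟩ := isCompact_Kset.tendsto_subseq hpK
    have ht0 : Filter.Tendsto t Filter.atTop (nhds 0) := tendsto_one_div_add_atTop_nhds_zero_nat
    have hlam0 : Filter.Tendsto lam Filter.atTop (nhds 0) := by
      have h1 : Filter.Tendsto (fun n => ((t n : ℝ) : 𝕜)) Filter.atTop (nhds ((0:ℝ):𝕜)) :=
        (RCLike.continuous_ofReal.tendsto (0:ℝ)).comp ht0
      have h2 := h1.mul_const σ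
      simpa using h2
    have hU : Filter.Tendsto (fun k => u (φ k)) Filter.atTop (nhds (q.2 (T q.1))) :=
      ((continuous_eval T).tendsto q).comp hconv
    have hV : Filter.Tendsto (fun k => v (φ k)) Filter.atTop (nhds (q.2 (A q.1))) :=
      ((continuous_eval A).tendsto q).comp hconv
    have hlamφ : Filter.Tendsto (fun k => lam (φ k)) Filter.atTop (nhds 0) :=
      hlam0.comp hφ.tendsto_atTop
    have hlim : Filter.Tendsto (fun k => u (φ k) + lam (φ k) * v (φ k)) Filter.atTop
        (nhds (q.2 (T q.1))) := by
      have h1 := hU.add (hlamφ.mul hV)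
      simpa using h1
    have hge : ν ≤ ‖q.2 (T q.1)‖ :=
      ge_of_tendsto hlim.norm (Filter.Eventually.of_forall fun k => hkey (φ k))
    have hqMW : q ∈ MW T := ⟨hqK.1, hqK.2.1, hqK.2.2, le_antisymm (le_nrad T hqK) hge⟩
    rw [hM] at hqMW
    obtain ⟨μ, hμ, hqeq⟩ := hqMW
    have hμμ : μ * (starRingEnd 𝕜) μ = 1 := by
      rw [RCLike.mul_conj, hμ]; norm_num
    have hq1 : q.1 = μ • x₀ := by rw [hqeq]
    have hq2 : q.2 = (starRingEnd 𝕜) μ • f₀ := by rw [hqeq]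
    have hqT : q.2 (T q.1) = a := by
      rw [hq1, hq2]
      simp only [ContinuousLinearMap.smul_apply, map_smul, smul_eq_mul]
      rw [← mul_assoc, hμμ, one_mul, hadef]
    have hqA : q.2 (A q.1) = c := by
      rw [hq1, hq2]
      simp only [ContinuousLinearMap.smul_apply, map_smul, smul_eq_mul]
      rw [← mul_assoc, hμμ, one_mul, hcdef]
    -- the limit of the real sequence g
    set g : ℕ → ℝ := fun k => RCLike.re ((starRingEnd 𝕜) (u (φ k)) * (σ * v (φ k))) with hgdef
    have hval : (starRingEnd 𝕜) a * (σ * c) = ((-(ν * ‖c‖) : ℝ) : 𝕜) := by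
      have h1 : (starRingEnd 𝕜) a * (σ * c)
          = -(((starRingEnd 𝕜) a * a) * ((starRingEnd 𝕜) c * c)) / (((ν * ‖c‖ : ℝ) : 𝕜)) := by
        rw [hσdef]; ring
      rw [h1, RCLike.conj_mul, RCLike.conj_mul, ha]
      rw [show -((((ν:ℝ):𝕜))^2 * (((‖c‖:ℝ):𝕜))^2) = (((-(ν^2 * ‖c‖^2)) : ℝ) : 𝕜) by push_cast; ring]
      rw [← RCLike.ofReal_div]
      congr 1
      field_simp
    have hg : Filter.Tendsto g Filter.atTop (nhds (-(ν * ‖c‖))) := by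
      have hcont : Continuous fun z : 𝕜 × 𝕜 => RCLike.re ((starRingEnd 𝕜) z.1 * (σ * z.2)) :=
        RCLike.continuous_re.comp
          (((RCLike.continuous_conj.comp continuous_fst).mul
            (continuous_const.mul continuous_snd)))
      have h2 : Filter.Tendsto (fun k => (u (φ k), v (φ k))) Filter.atTop
          (nhds (q.2 (T q.1), q.2 (A q.1))) := hU.prodMk_nhds hV
      have h3 := (hcont.tendsto _).comp h2
      rw [hqT, hqA] at h3
      have h4 : RCLike.re ((starRingEnd 𝕜) a * (σ * c)) = -(ν * ‖c‖) := by
        rw [hval, RCLike.ofReal_re]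
      rw [h4] at h3
      exact h3
    have h1 : ∀ᶠ k in Filter.atTop, g k < -(ν * ‖c‖)/2 :=
      hg.eventually_lt_const (by linarith)
    have h2 : ∀ᶠ k in Filter.atTop, t (φ k) * ‖A‖^2 < ν * ‖c‖ := by
      have h5 : Filter.Tendsto (fun k => t (φ k) * ‖A‖^2) Filter.atTop (nhds (0 * ‖A‖^2)) :=
        ((ht0.comp hφ.tendsto_atTop).mul_const _)
      rw [zero_mul] at h5
      exact h5.eventually_lt_const hd_pos
    obtain ⟨k, hk1, hk2⟩ := (h1.and h2).exists
    have hsq : ‖u (φ k) + lam (φ k) * v (φ k)‖^2 = ‖u (φ k)‖^2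
        + 2 * RCLike.re ((starRingEnd 𝕜) (u (φ k)) * (lam (φ k) * v (φ k)))
        + ‖lam (φ k) * v (φ k)‖^2 := norm_add_sq' _ _
    have hre : RCLike.re ((starRingEnd 𝕜) (u (φ k)) * (lam (φ k) * v (φ k))) = t (φ k) * g k := by
      have h6 : (starRingEnd 𝕜) (u (φ k)) * (lam (φ k) * v (φ k))
          = ((t (φ k) : ℝ) : 𝕜) * ((starRingEnd 𝕜) (u (φ k)) * (σ * v (φ k))) := by
        rw [hlamdef]; ring
      rw [h6, RCLike.re_ofReal_mul, hgdef]
    have hnorm_lam : ‖lam (φ k)‖ = t (φ k) := by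
      rw [hlamdef]
      simp only [norm_mul, RCLike.norm_ofReal, hσ1, mul_one]
      exact abs_of_pos (htpos _)
    have hnv : ‖lam (φ k) * v (φ k)‖ ≤ t (φ k) * ‖A‖ := by
      rw [norm_mul, hnorm_lam]
      exact mul_le_mul_of_nonneg_left (hv_le _) (htpos _).le
    have hsq2 : ν^2 ≤ ‖u (φ k) + lam (φ k) * v (φ k)‖^2 :=
      pow_le_pow_left₀ hν_pos.le (hkey (φ k)) 2
    have e1 : ‖u (φ k)‖^2 ≤ ν^2 := pow_le_pow_left₀ (norm_nonneg _) (hu_le _) 2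
    have e2 : ‖lam (φ k) * v (φ k)‖^2 ≤ (t (φ k))^2 * ‖A‖^2 := by
      have := pow_le_pow_left₀ (norm_nonneg _) hnv 2
      rwa [mul_pow] at this
    have htp := htpos (φ k)
    have hcomb : ν^2 ≤ ν^2 + 2 * (t (φ k) * g k) + (t (φ k))^2 * ‖A‖^2 := by
      have h7 := hsq2
      rw [hsq, hre] at h7
      linarith [e1, e2]
    have s2 : (0:ℝ) ≤ 2 * (t (φ k) * g k) + t (φ k) * (t (φ k) * ‖A‖^2) := by
      have h8 : (t (φ k))^2 * ‖A‖^2 = t (φ k) * (t (φ k) * ‖A‖^2) := by ring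
      linarith [hcomb, h8.symm.le, h8.le]
    have s3 : t (φ k) * g k < t (φ k) * (-(ν * ‖c‖)/2) := mul_lt_mul_of_pos_left hk1 htp
    have s3' : t (φ k) * (-(ν * ‖c‖)/2) = -(t (φ k) * (ν * ‖c‖))/2 := by ring
    rw [s3'] at s3
    have s5 : t (φ k) * (t (φ k) * ‖A‖^2) < t (φ k) * (ν * ‖c‖) :=
      mul_lt_mul_of_pos_left hk2 htp
    linarith [s2, s3, s5]
  · intro hc0 lam
    have h1 : f₀ ((T + lam • A) x₀) = f₀ (T x₀) := by
      simp [ContinuousLinearMap.add_apply, ContinuousLinearMap.smul_apply, map_add, map_smul,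
        smul_eq_mul, hc0]
    calc nrad T = ‖f₀ (T x₀)‖ := hTx₀.symm
      _ = ‖f₀ ((T + lam • A) x₀)‖ := by rw [h1]
      _ ≤ nrad (T + lam • A) := le_nrad _ hK₀
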